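/- arXiv:1904.01391 — 5 statements merged into one kernel-verified Lean document; each statement's English description precedes it below -/
import Mathlib

section
/- Let E be a nontrivial finite-dimensional real inner product space, let A : E → E be an invertible continuous linear map, and let χ > 0. If ξ ∈ E is a nonzero vector such that ∑_{m=0}^∞ ‖A^m ξ‖² e^{2χm} < ∞, then limsup_{m→∞} (1/m)·log‖A^m ξ‖ < −χ; equivalently, there exist χ' > χ and C > 0 such that ‖A^m ξ‖ ≤ C e^{−χ' m} for all m ≥ 0. -/
open Filter Real
open scoped ENNReal NNReal

set_option maxRecDepth 8000
set_option maxHeartbeats 1000000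
set_option synthInstance.maxHeartbeats 400000

section Aux

variable {E : Type*} [NormedAddCommGroup E] [InnerProductSpace ℝ E]
    [Nontrivial E] [FiniteDimensional ℝ E]

lemma aux_decay (A : E ≃L[ℝ] E) (χ : ℝ) (hχ : 0 < χ) (ξ : E) (hξ : ξ ≠ 0)
    (hsum : Summable fun m : ℕ => ‖((A : E →L[ℝ] E) ^ m) ξ‖ ^ 2 * Real.exp (2 * χ * m)) :
    ∃ χ' C : ℝ, χ < χ' ∧ 0 < C ∧
      ∀ m : ℕ, ‖((A : E →L[ℝ] E) ^ m) ξ‖ ≤ C * Real.exp (-χ' * m) := by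
  classical
  haveI : Fact ((1:ℝ≥0∞) ≤ 2) := ⟨one_le_two⟩
  set B := (A : E →L[ℝ] E) with hBdef
  set g : E → ℕ → E := fun v m => Real.exp (χ * m) • (B ^ m) v with hgdef
  set s : E → ℝ := fun v => ∑' m : ℕ, ‖(B ^ m) v‖ ^ 2 * Real.exp (2 * χ * m) with hsdef
  have hrp : ∀ x : ℝ, 0 ≤ x → x ^ ((2:ℝ≥0∞).toReal) = x ^ 2 := by
    intro x hx
    have h2 : ((2:ℝ≥0∞).toReal) = (2:ℝ) := by norm_num
    rw [h2, Real.rpow_two]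
  have hgnorm2 : ∀ v (m : ℕ), ‖g v m‖ ^ 2 =
      ‖(B ^ m) v‖ ^ 2 * Real.exp (2 * χ * m) := by
    intro v m
    have h1 : ‖g v m‖ = Real.exp (χ * m) * ‖(B ^ m) v‖ := by
      simp [hgdef, norm_smul, abs_of_pos (Real.exp_pos _)]
    rw [h1]
    have h3 : Real.exp (χ * m) ^ 2 = Real.exp (2 * χ * m) := by
      rw [sq, ← Real.exp_add]; ring_nf
    rw [mul_pow, h3]; ring
  have hgnorm : ∀ v (m : ℕ), ‖g v m‖ ^ ((2:ℝ≥0∞).toReal) =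
      ‖(B ^ m) v‖ ^ 2 * Real.exp (2 * χ * m) := by
    intro v m
    rw [hrp _ (norm_nonneg _)]
    exact hgnorm2 v m
  have memiff : ∀ v : E, Memℓp (g v) 2 ↔
      Summable (fun m : ℕ => ‖(B ^ m) v‖ ^ 2 * Real.exp (2 * χ * m)) := by
    intro v
    rw [memℓp_gen_iff (by norm_num : 0 < (2:ℝ≥0∞).toReal)]
    exact summable_congr fun m => hgnorm v m
  -- the submodule of summable vectors
  set V : Submodule ℝ E :=
    { carrier := {v | Memℓp (g v) 2}
      add_mem' := by
        intro v w hv hw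
        have := hv.add hw
        have hfun : g (v + w) = (g v + g w) := by
          funext m; simp [hgdef, smul_add]
        simpa [hfun] using this
      zero_mem' := by
        have hfun : g 0 = (0 : ℕ → E) := by funext m; simp [hgdef]
        simpa [Set.mem_setOf_eq, hfun] using (zero_memℓp (p := 2) (E := fun _ : ℕ => E))
      smul_mem' := by
        intro c v hv
        have := hv.const_smul c
        have hfun : g (c • v) = (c • g v) := by
          funext m
          show Real.exp (χ * m) • (B ^ m) (c • v) = c • (Real.exp (χ * m) • (B ^ m) v)
          rw [map_smul]
          exact smul_comm _ _ _
        simpa [hfun] using this } with hVdef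
  have hmemV : ∀ v : E, v ∈ V ↔ Memℓp (g v) 2 := fun v => Iff.rfl
  -- the linear map into lp
  set T : V →ₗ[ℝ] lp (fun _ : ℕ => E) 2 :=
    { toFun := fun v => ⟨g v.1, v.2⟩
      map_add' := by
        intro v w
        apply lp.ext
        rw [lp.coeFn_add]
        funext m; simp [hgdef, smul_add]
      map_smul' := by
        intro c v
        simp only [RingHom.id_apply]
        apply lp.ext
        rw [lp.coeFn_smul]
        funext m
        show Real.exp (χ * m) • (B ^ m) ((c • v : V) : E) = c • (Real.exp (χ * m) • (B ^ m) (v : E))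
        rw [Submodule.coe_smul, map_smul]
        exact smul_comm _ _ _ } with hTdef
  haveI : FiniteDimensional ℝ V := inferInstance
  set Tc : V →L[ℝ] lp (fun _ : ℕ => E) 2 := LinearMap.toContinuousLinearMap T with hTcdef
  have hp2 : (0:ℝ) < (2:ℝ≥0∞).toReal := by norm_num
  -- norm of Tc v squared equals s v
  have hTnorm : ∀ v : V, ‖Tc v‖ ^ 2 = s v.1 := by
    intro v
    have h0 := lp.norm_rpow_eq_tsum hp2 (Tc v)
    rw [hrp _ (norm_nonneg _)] at h0
    rw [h0, hsdef]
    refine tsum_congr fun m => ?_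
    have hcoe : (Tc v : ℕ → E) m = g v.1 m := rfl
    rw [hcoe, hgnorm]
  have hsummand_nonneg : ∀ v : E, ∀ m : ℕ,
      0 ≤ ‖(B ^ m) v‖ ^ 2 * Real.exp (2 * χ * m) :=
    fun v m => mul_nonneg (sq_nonneg _) (Real.exp_pos _).le
  have hs_ge : ∀ v : E, Summable (fun m : ℕ => ‖(B ^ m) v‖ ^ 2 * Real.exp (2 * χ * m)) →
      ‖v‖ ^ 2 ≤ s v := by
    intro v hv
    have h0 : ‖(B ^ 0) v‖ ^ 2 * Real.exp (2 * χ * (0:ℕ)) = ‖v‖ ^ 2 := by simp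
    rw [hsdef, ← h0]
    exact Summable.le_tsum hv 0 fun m _ => hsummand_nonneg v m
  have hs_nonneg : ∀ v : E, 0 ≤ s v := fun v => tsum_nonneg (hsummand_nonneg v)
  -- operator norm bound
  set K : ℝ := ‖Tc‖ + 2 with hKdef
  have hK2 : (2:ℝ) ≤ K := by
    rw [hKdef]; linarith [norm_nonneg Tc]
  have hKpos : (0:ℝ) < K := by linarith
  have hTle : ∀ v : V, s v.1 ≤ K ^ 2 * ‖v.1‖ ^ 2 := by
    intro v
    have h1 : ‖Tc v‖ ≤ K * ‖v‖ := by
      have := Tc.le_opNorm v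
      have hn : ‖Tc‖ * ‖v‖ ≤ K * ‖v‖ :=
        mul_le_mul_of_nonneg_right (by rw [hKdef]; linarith [norm_nonneg Tc]) (norm_nonneg _)
      linarith
    have hvn : ‖(v : E)‖ = ‖v‖ := rfl
    calc s v.1 = ‖Tc v‖ ^ 2 := (hTnorm v).symm
      _ ≤ (K * ‖v‖) ^ 2 := by
          have h0 : (0:ℝ) ≤ ‖Tc v‖ := norm_nonneg _
          have hKv : (0:ℝ) ≤ K * ‖v‖ := by positivity
          nlinarith [h0, h1, hKv]
      _ = K ^ 2 * ‖v.1‖ ^ 2 := by rw [hvn]; ring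
  -- the key identity
  have hkey : ∀ v : E, v ∈ V → (B v ∈ V ∧
      s (B v) = Real.exp (-(2 * χ)) * (s v - ‖v‖ ^ 2)) := by
    intro v hv
    have ha : Summable (fun m : ℕ => ‖(B ^ m) v‖ ^ 2 * Real.exp (2 * χ * m)) :=
      (memiff v).1 hv
    set a : ℕ → ℝ := fun m => ‖(B ^ m) v‖ ^ 2 * Real.exp (2 * χ * m) with hadef
    have hterm : ∀ m : ℕ, ‖(B ^ m) (B v)‖ ^ 2 * Real.exp (2 * χ * m)
        = Real.exp (-(2 * χ)) * a (m + 1) := by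
      intro m
      have h1 : (B ^ m) (B v) = (B ^ (m + 1)) v := by
        rw [pow_succ]; rfl
      have h2 : Real.exp (2 * χ * ((m:ℝ) + 1)) =
          Real.exp (2 * χ * m) * Real.exp (2 * χ) := by
        rw [← Real.exp_add]; ring_nf
      have h3 : Real.exp (-(2 * χ)) * Real.exp (2 * χ) = 1 := by
        rw [← Real.exp_add]; simp
      rw [h1, hadef]
      push_cast
      rw [h2]
      linear_combination (-(‖(⇑B)^[m+1] v‖ ^ 2 * Real.exp (2 * χ * (m:ℝ)))) * h3
    have hashift : Summable fun m : ℕ => a (m + 1) :=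
      (summable_nat_add_iff 1).2 ha
    have hsummB : Summable (fun m : ℕ => ‖(B ^ m) (B v)‖ ^ 2 * Real.exp (2 * χ * m)) := by
      refine Summable.congr (hashift.mul_left (Real.exp (-(2 * χ)))) fun m => ?_
      exact (hterm m).symm
    constructor
    · exact (memiff (B v)).2 hsummB
    · have h4 : s (B v) = ∑' m : ℕ, Real.exp (-(2 * χ)) * a (m + 1) := by
        rw [hsdef]; exact tsum_congr hterm
      rw [h4, tsum_mul_left]
      have h5 : ∑' m : ℕ, a m = a 0 + ∑' m : ℕ, a (m + 1) := Summable.tsum_eq_zero_add ha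
      have h6 : a 0 = ‖v‖ ^ 2 := by simp [hadef]
      have h7 : s v = a 0 + ∑' m : ℕ, a (m + 1) := h5
      rw [h6] at h7
      rw [show (∑' m : ℕ, a (m+1)) = s v - ‖v‖^2 by linarith]
  -- the contraction constant
  set ρ : ℝ := Real.exp (-(2 * χ)) * (1 - 1 / K ^ 2) with hρdef
  have hKsq : (4:ℝ) ≤ K ^ 2 := by nlinarith
  have hfrac : (0:ℝ) < 1 / K ^ 2 := by positivity
  have hfrac' : 1 / K ^ 2 ≤ 1 / 4 := by
    apply div_le_div_of_nonneg_left <;> linarith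
  have hρpos : 0 < ρ := by
    apply mul_pos (Real.exp_pos _); linarith
  have hρlt : ρ < Real.exp (-(2 * χ)) := by
    have := Real.exp_pos (-(2 * χ)); nlinarith
  -- contraction step
  have hstep : ∀ v : E, v ∈ V → s (B v) ≤ ρ * s v := by
    intro v hv
    obtain ⟨_, hid⟩ := hkey v hv
    have hle : s v / K ^ 2 ≤ ‖v‖ ^ 2 := by
      have := hTle ⟨v, hv⟩
      rw [div_le_iff₀ (by positivity)]
      simpa [mul_comm] using this
    rw [hid, hρdef]
    have hexp := (Real.exp_pos (-(2 * χ))).le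
    have : s v - ‖v‖ ^ 2 ≤ (1 - 1 / K ^ 2) * s v := by
      have : s v * (1 / K ^ 2) ≤ ‖v‖ ^ 2 := by
        rw [mul_one_div]; exact hle
      nlinarith [this]
    calc Real.exp (-(2 * χ)) * (s v - ‖v‖ ^ 2)
        ≤ Real.exp (-(2 * χ)) * ((1 - 1 / K ^ 2) * s v) :=
          mul_le_mul_of_nonneg_left this hexp
      _ = Real.exp (-(2 * χ)) * (1 - 1 / K ^ 2) * s v := by ring
  -- by induction
  have hξV : ξ ∈ V := (memiff ξ).2 hsum
  have hind : ∀ m : ℕ, (B ^ m) ξ ∈ V ∧ s ((B ^ m) ξ) ≤ ρ ^ m * s ξ := by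
    intro m
    induction m with
    | zero => refine ⟨by simpa using hξV, by simp⟩
    | succ n ih =>
      obtain ⟨hmem, hle⟩ := ih
      have h1 : (B ^ (n + 1)) ξ = B ((B ^ n) ξ) := by
        rw [pow_succ']; exact ContinuousLinearMap.mul_apply B (B ^ n) ξ
      obtain ⟨hmem', _⟩ := hkey _ hmem
      refine ⟨by rw [h1]; exact hmem', ?_⟩
      rw [h1]
      calc s (B ((B ^ n) ξ)) ≤ ρ * s ((B ^ n) ξ) := hstep _ hmem
        _ ≤ ρ * (ρ ^ n * s ξ) := mul_le_mul_of_nonneg_left hle hρpos.le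
        _ = ρ ^ (n + 1) * s ξ := by ring
  -- define χ' and C
  set χ' : ℝ := -(Real.log ρ) / 2 with hχ'def
  have hlog : Real.log ρ < -(2 * χ) := by
    have := Real.log_lt_log hρpos hρlt
    rwa [Real.log_exp] at this
  have hχ'gt : χ < χ' := by rw [hχ'def]; linarith
  have hρexp : ρ = Real.exp (-(2 * χ')) := by
    rw [hχ'def]
    have : -(2 * (-(Real.log ρ) / 2)) = Real.log ρ := by ring
    rw [this, Real.exp_log hρpos]
  have hsξpos : 0 < s ξ := by
    have h1 := hs_ge ξ hsum
    have h2 : 0 < ‖ξ‖ ^ 2 := pow_pos (norm_pos_iff.2 hξ) 2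
    linarith
  refine ⟨χ', Real.sqrt (s ξ), hχ'gt, Real.sqrt_pos.2 hsξpos, ?_⟩
  intro m
  obtain ⟨hmem, hle⟩ := hind m
  have hsm : ‖(B ^ m) ξ‖ ^ 2 ≤ ρ ^ m * s ξ :=
    le_trans (hs_ge _ ((memiff _).1 hmem)) hle
  have hρm : ρ ^ m = Real.exp (-χ' * m) ^ 2 := by
    rw [hρexp, ← Real.exp_nat_mul, sq, ← Real.exp_add]
    congr 1; ring
  have hrhs : Real.sqrt (s ξ) * Real.exp (-χ' * m) ≥ 0 := by positivity
  have h2 : ‖(B ^ m) ξ‖ ^ 2 ≤ (Real.sqrt (s ξ) * Real.exp (-χ' * m)) ^ 2 := by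
    rw [mul_pow, Real.sq_sqrt hsξpos.le]
    rw [hρm] at hsm; linarith [hsm]
  calc ‖(B ^ m) ξ‖ = Real.sqrt (‖(B ^ m) ξ‖ ^ 2) := (Real.sqrt_sq (norm_nonneg _)).symm
    _ ≤ Real.sqrt ((Real.sqrt (s ξ) * Real.exp (-χ' * m)) ^ 2) := Real.sqrt_le_sqrt h2
    _ = Real.sqrt (s ξ) * Real.exp (-χ' * m) := Real.sqrt_sq hrhs

end Aux

/-- If `A` is an invertible continuous linear map of a nontrivial
finite-dimensional real inner product space `E`, `χ > 0`, and `ξ ≠ 0` satisfies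
`∑_{m} ‖A^m ξ‖² e^{2χm} < ∞`, then `limsup (1/m) log ‖A^m ξ‖ < -χ`; equivalently
there are `χ' > χ` and `C > 0` with `‖A^m ξ‖ ≤ C e^{-χ' m}` for all `m`. -/
theorem periodic_summable_implies_hyperbolic_fixed_point
    {E : Type*} [NormedAddCommGroup E] [InnerProductSpace ℝ E]
    [Nontrivial E] [FiniteDimensional ℝ E]
    (A : E ≃L[ℝ] E) (χ : ℝ) (hχ : 0 < χ) (ξ : E) (hξ : ξ ≠ 0)
    (hsum : Summable fun m : ℕ => ‖((A : E →L[ℝ] E) ^ m) ξ‖ ^ 2 * Real.exp (2 * χ * m)) :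
    Filter.limsup (fun m : ℕ => (1 / (m : ℝ)) * Real.log ‖((A : E →L[ℝ] E) ^ m) ξ‖)
      Filter.atTop < -χ ∧
    ∃ χ' C : ℝ, χ < χ' ∧ 0 < C ∧
      ∀ m : ℕ, ‖((A : E →L[ℝ] E) ^ m) ξ‖ ≤ C * Real.exp (-χ' * m) := by
  obtain ⟨χ', C, hχ', hC, hdecay⟩ := aux_decay A χ hχ ξ hξ hsum
  set B := (A : E →L[ℝ] E) with hBdef
  have hpos : ∀ m : ℕ, 0 < ‖(B ^ m) ξ‖ := by
    intro m
    rw [norm_pos_iff]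
    induction m with
    | zero => simpa using hξ
    | succ n ih =>
      have h1 : (B ^ (n + 1)) ξ = B ((B ^ n) ξ) := by
        rw [pow_succ']; exact ContinuousLinearMap.mul_apply B (B ^ n) ξ
      rw [h1]
      intro hzero
      exact ih (by simpa using (A.map_eq_zero_iff).1 hzero)
  set χ'' : ℝ := (χ + χ') / 2 with hχ''def
  have hχ''1 : χ < χ'' := by rw [hχ''def]; linarith
  have hχ''2 : χ'' < χ' := by rw [hχ''def]; linarith
  have hlim : Filter.Tendsto (fun m : ℕ => Real.log C / m) atTop (nhds 0) :=
    tendsto_const_div_atTop_nhds_zero_nat _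
  have h1 : ∀ᶠ m : ℕ in atTop, Real.log C / m ≤ χ' - χ'' := by
    have : Set.Iic (χ' - χ'') ∈ nhds (0:ℝ) := Iic_mem_nhds (by linarith)
    exact hlim.eventually (eventually_mem_set.2 this)
  have hev : ∀ᶠ m : ℕ in atTop,
      (1 / (m : ℝ)) * Real.log ‖(B ^ m) ξ‖ ≤ -χ'' := by
    filter_upwards [h1, eventually_gt_atTop 0] with m hm hm0
    have hmR : (0:ℝ) < m := by exact_mod_cast hm0
    have hlog : Real.log ‖(B ^ m) ξ‖ ≤ Real.log C + (-χ' * m) := by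
      have hd := hdecay m
      have hl := Real.log_le_log (hpos m) hd
      rwa [Real.log_mul (ne_of_gt hC) (Real.exp_ne_zero _), Real.log_exp] at hl
    calc (1 / (m : ℝ)) * Real.log ‖(B ^ m) ξ‖
        ≤ (1 / (m : ℝ)) * (Real.log C + (-χ' * m)) :=
          mul_le_mul_of_nonneg_left hlog (by positivity)
      _ = Real.log C / m - χ' := by field_simp; ring
      _ ≤ (χ' - χ'') - χ' := by linarith
      _ = -χ'' := by ring
  -- lower bound to get coboundedness
  set M : ℝ := ‖(A.symm : E →L[ℝ] E)‖ with hMdef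
  have hlow : ∀ m : ℕ, ‖ξ‖ ≤ M ^ m * ‖(B ^ m) ξ‖ := by
    intro m
    induction m with
    | zero => simp
    | succ n ih =>
      have h1 : (B ^ n) ξ = (A.symm : E →L[ℝ] E) ((B ^ (n + 1)) ξ) := by
        have h2 : (B ^ (n + 1)) ξ = B ((B ^ n) ξ) := by
          rw [pow_succ']; exact ContinuousLinearMap.mul_apply B (B ^ n) ξ
        rw [h2]
        exact (A.symm_apply_apply ((B ^ n) ξ)).symm
      have h3 : ‖(B ^ n) ξ‖ ≤ M * ‖(B ^ (n + 1)) ξ‖ := by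
        rw [h1]; exact (A.symm : E →L[ℝ] E).le_opNorm _
      calc ‖ξ‖ ≤ M ^ n * ‖(B ^ n) ξ‖ := ih
        _ ≤ M ^ n * (M * ‖(B ^ (n + 1)) ξ‖) := by
            apply mul_le_mul_of_nonneg_left h3
            positivity
        _ = M ^ (n + 1) * ‖(B ^ (n + 1)) ξ‖ := by ring
  have hMpos : 0 < M := by
    by_contra h
    push_neg at h
    have h1 := hlow 1
    have h2 : M ^ 1 * ‖(B ^ 1) ξ‖ ≤ 0 := by
      apply mul_nonpos_of_nonpos_of_nonneg _ (norm_nonneg _)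
      simpa using h
    have := norm_pos_iff.2 hξ
    linarith
  have hξpos : 0 < ‖ξ‖ := norm_pos_iff.2 hξ
  have hlb : ∀ᶠ m : ℕ in atTop,
      -(|Real.log ‖ξ‖| + |Real.log M|) ≤ (1 / (m : ℝ)) * Real.log ‖(B ^ m) ξ‖ := by
    filter_upwards [eventually_ge_atTop 1] with m hm1
    have hmR : (1:ℝ) ≤ m := by exact_mod_cast hm1
    have hmpos : (0:ℝ) < m := by linarith
    have hBm := hpos m
    have hlog1 : Real.log ‖ξ‖ - m * Real.log M ≤ Real.log ‖(B ^ m) ξ‖ := by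
      have h4 : Real.log ‖ξ‖ ≤ Real.log (M ^ m * ‖(B ^ m) ξ‖) :=
        Real.log_le_log hξpos (hlow m)
      rw [Real.log_mul (by positivity) (ne_of_gt hBm), Real.log_pow] at h4
      push_cast at h4 ⊢
      linarith
    have h5 : (1 / (m : ℝ)) * (Real.log ‖ξ‖ - m * Real.log M)
        ≤ (1 / (m : ℝ)) * Real.log ‖(B ^ m) ξ‖ :=
      mul_le_mul_of_nonneg_left hlog1 (by positivity)
    have h6 : (1 / (m : ℝ)) * (Real.log ‖ξ‖ - m * Real.log M)
        = Real.log ‖ξ‖ / m - Real.log M := by field_simp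
    have h7 : -|Real.log ‖ξ‖| ≤ Real.log ‖ξ‖ / m := by
      rcases le_or_gt 0 (Real.log ‖ξ‖) with h | h
      · have : 0 ≤ Real.log ‖ξ‖ / m := by positivity
        linarith [abs_nonneg (Real.log ‖ξ‖)]
      · have h8 : Real.log ‖ξ‖ ≤ Real.log ‖ξ‖ / m := by
          rw [le_div_iff₀ hmpos]
          nlinarith
        have : -|Real.log ‖ξ‖| = Real.log ‖ξ‖ := by
          rw [abs_of_neg h]; ring
        linarith
    have h9 : -|Real.log M| ≤ -Real.log M := by
      have := le_abs_self (Real.log M)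
      linarith
    linarith
  constructor
  · have hcb : Filter.IsCoboundedUnder (· ≤ ·) atTop
        (fun m : ℕ => (1 / (m : ℝ)) * Real.log ‖(B ^ m) ξ‖) :=
      Filter.isCoboundedUnder_le_of_eventually_le atTop hlb
    have := Filter.limsup_le_of_le hcb hev
    calc Filter.limsup (fun m : ℕ => (1 / (m : ℝ)) * Real.log ‖(B ^ m) ξ‖) atTop
        ≤ -χ'' := this
      _ < -χ := by linarith
  · exact ⟨χ', C, hχ', hC, hdecay⟩
end

section
/- Let E be a nontrivial finite-dimensional real inner product space, let χ > 0, let l ≥ 1 be an integer, and let (A_n)_{n≥0} be a sequence of invertible continuous linear maps of E which is l-periodic, i.e. A_{n+l} = A_n for all n ≥ 0. Define B_0 = id_E and B_{m+1} = A_m ∘ B_m for m ≥ 0. If for every ξ ∈ E one has ∑_{m=0}^∞ ‖B_m ξ‖² e^{2χm} < ∞, then for every nonzero ξ ∈ E, limsup_{m→∞} (1/m)·log‖B_m ξ‖ < −χ. -/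
open Filter Real

lemma opnorm_tendsto_zero_of_pointwise
    {E : Type*} [NormedAddCommGroup E] [NormedSpace ℝ E] [FiniteDimensional ℝ E]
    (S : ℕ → (E →L[ℝ] E)) (h : ∀ x : E, Tendsto (fun k => ‖S k x‖) atTop (nhds 0)) :
    Tendsto (fun k => ‖S k‖) atTop (nhds 0) := by
  classical
  set b := Module.finBasis ℝ E with hb
  set coordL : Fin (Module.finrank ℝ E) → (E →L[ℝ] ℝ) :=
    fun i => LinearMap.toContinuousLinearMap (b.coord i) with hcoordL
  have key : ∀ (U : E →L[ℝ] E), ‖U‖ ≤ ∑ i, ‖coordL i‖ * ‖U (b i)‖ := by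
    intro U
    refine ContinuousLinearMap.opNorm_le_bound _ (by positivity) fun x => ?_
    have hx : U x = ∑ i, b.repr x i • U (b i) := by
      conv_lhs => rw [← b.sum_repr x]
      rw [map_sum]
      simp [map_smul]
    calc ‖U x‖ = ‖∑ i, b.repr x i • U (b i)‖ := by rw [hx]
      _ ≤ ∑ i, ‖b.repr x i • U (b i)‖ := norm_sum_le _ _
      _ ≤ ∑ i, (‖coordL i‖ * ‖x‖) * ‖U (b i)‖ := by
          refine Finset.sum_le_sum fun i _ => ?_
          rw [norm_smul]
          have : ‖b.repr x i‖ ≤ ‖coordL i‖ * ‖x‖ := by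
            have := (coordL i).le_opNorm x
            simpa [hcoordL] using this
          exact mul_le_mul_of_nonneg_right this (norm_nonneg _)
      _ = (∑ i, ‖coordL i‖ * ‖U (b i)‖) * ‖x‖ := by
          rw [Finset.sum_mul]; congr 1; ext i; ring
  have hg : Tendsto (fun k => ∑ i, ‖coordL i‖ * ‖S k (b i)‖) atTop (nhds 0) := by
    have : Tendsto (fun k => ∑ i : Fin (Module.finrank ℝ E), ‖coordL i‖ * ‖S k (b i)‖) atTop
        (nhds (∑ i : Fin (Module.finrank ℝ E), ‖coordL i‖ * 0)) := by
      refine tendsto_finset_sum _ fun i _ => ?_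
      exact (h (b i)).const_mul _
    simpa using this
  exact squeeze_zero (fun k => norm_nonneg _) (fun k => key (S k)) hg

set_option synthInstance.maxHeartbeats 1000000 in
set_option maxHeartbeats 1000000 in
/-- linear-cocycle form of "periodic χ-summable points are χ-hyperbolic". -/
theorem periodic_cocycle_summable_implies_hyperbolic
    {E : Type*} [NormedAddCommGroup E] [InnerProductSpace ℝ E]
    [Nontrivial E] [FiniteDimensional ℝ E]
    (χ : ℝ) (hχ : 0 < χ) (l : ℕ) (hl : 1 ≤ l)
    (A : ℕ → (E ≃L[ℝ] E)) (hper : ∀ n : ℕ, A (n + l) = A n)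
    (B : ℕ → (E →L[ℝ] E))
    (hB0 : B 0 = ContinuousLinearMap.id ℝ E)
    (hBsucc : ∀ m : ℕ, B (m + 1) = (A m : E →L[ℝ] E).comp (B m))
    (hsum : ∀ ξ : E, Summable fun m : ℕ => ‖B m ξ‖ ^ 2 * Real.exp (2 * χ * m)) :
    ∀ ξ : E, ξ ≠ 0 →
      Filter.limsup (fun m : ℕ => (1 / (m : ℝ)) * Real.log ‖B m ξ‖) Filter.atTop < -χ := by
  classical
  have hl0 : 0 < l := hl
  -- A is determined by its values mod l
  have hmod : ∀ m : ℕ, A m = A (m % l) := by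
    intro m
    induction m using Nat.strong_induction_on with
    | _ m ih =>
      rcases lt_or_ge m l with h | h
      · rw [Nat.mod_eq_of_lt h]
      · obtain ⟨m', rfl⟩ : ∃ m', m = m' + l := ⟨m - l, by omega⟩
        rw [hper m', ih m' (by omega), Nat.add_mod_right]
  -- uniform bound on inverses
  set N : ℝ := 1 + ∑ i ∈ Finset.range l, ‖(((A i).symm : E ≃L[ℝ] E) : E →L[ℝ] E)‖ with hN
  have hN1 : (1:ℝ) ≤ N := by
    have : (0:ℝ) ≤ ∑ i ∈ Finset.range l, ‖(((A i).symm : E ≃L[ℝ] E) : E →L[ℝ] E)‖ := by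
      positivity
    linarith
  have hN0 : (0:ℝ) < N := lt_of_lt_of_le one_pos hN1
  have hAinv : ∀ m : ℕ, ‖(((A m).symm : E ≃L[ℝ] E) : E →L[ℝ] E)‖ ≤ N := by
    intro m
    rw [hmod m]
    have hmem : m % l ∈ Finset.range l := Finset.mem_range.mpr (Nat.mod_lt m hl0)
    have hle : ‖(((A (m % l)).symm : E ≃L[ℝ] E) : E →L[ℝ] E)‖ ≤
        ∑ i ∈ Finset.range l, ‖(((A i).symm : E ≃L[ℝ] E) : E →L[ℝ] E)‖ :=
      Finset.single_le_sum (f := fun i => ‖(((A i).symm : E ≃L[ℝ] E) : E →L[ℝ] E)‖)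
        (fun i _ => norm_nonneg _) hmem
    linarith
  -- lower bound on ‖B m ξ‖
  have hlow : ∀ (m : ℕ) (η : E), ‖η‖ ≤ N ^ m * ‖B m η‖ := by
    intro m η
    induction m with
    | zero => simp [hB0]
    | succ m ih =>
      have hBm : B m η = ((A m).symm : E ≃L[ℝ] E) (B (m+1) η) := by
        rw [hBsucc m]; simp
      have h1 : ‖B m η‖ ≤ N * ‖B (m+1) η‖ := by
        rw [hBm]
        calc ‖((A m).symm : E ≃L[ℝ] E) (B (m+1) η)‖
            ≤ ‖(((A m).symm : E ≃L[ℝ] E) : E →L[ℝ] E)‖ * ‖B (m+1) η‖ :=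
              ((((A m).symm : E ≃L[ℝ] E) : E →L[ℝ] E)).le_opNorm _
          _ ≤ N * ‖B (m+1) η‖ := mul_le_mul_of_nonneg_right (hAinv m) (norm_nonneg _)
      calc ‖η‖ ≤ N ^ m * ‖B m η‖ := ih
        _ ≤ N ^ m * (N * ‖B (m+1) η‖) := by
            exact mul_le_mul_of_nonneg_left h1 (by positivity)
        _ = N ^ (m+1) * ‖B (m+1) η‖ := by ring
  have hBpos : ∀ (m : ℕ) (η : E), η ≠ 0 → 0 < ‖B m η‖ := by
    intro m η hη
    by_contra h
    push_neg at h
    have : ‖B m η‖ = 0 := le_antisymm h (norm_nonneg _)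
    have h2 := hlow m η
    rw [this, mul_zero] at h2
    exact hη (norm_le_zero_iff.mp h2)
  -- cocycle structure
  have hshift : ∀ m : ℕ, B (m + l) = (B m).comp (B l) := by
    intro m
    induction m with
    | zero => rw [hB0]; simp
    | succ m ih =>
      have : m + 1 + l = (m + l) + 1 := by ring
      rw [this, hBsucc (m + l), ih, hper m, hBsucc m, ContinuousLinearMap.comp_assoc]
  have hrep : ∀ (k r : ℕ), B (r + k * l) = (B r).comp ((B l) ^ k) := by
    intro k
    induction k with
    | zero => intro r; simp [ContinuousLinearMap.one_def]
    | succ k ih =>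
      intro r
      have : r + (k+1) * l = (r + k * l) + l := by ring
      rw [this, hshift, ih r, ContinuousLinearMap.comp_assoc, pow_succ]
      rfl
  have hrep0 : ∀ k : ℕ, B (k * l) = (B l) ^ k := by
    intro k
    have := hrep k 0
    simpa [hB0] using this
  -- the rescaled cocycle T
  set T : E →L[ℝ] E := Real.exp (χ * l) • (B l) with hT
  have hTpow : ∀ k : ℕ, T ^ k = Real.exp (χ * l) ^ k • (B l) ^ k := fun k => smul_pow _ _ _
  have hTpt : ∀ η : E, Tendsto (fun k => ‖(T ^ k) η‖) atTop (nhds 0) := by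
    intro η
    have hsq : Tendsto (fun k : ℕ => ‖(T ^ k) η‖ ^ 2) atTop (nhds 0) := by
      have hcomp : Tendsto (fun k : ℕ => k * l) atTop atTop :=
        tendsto_atTop_mono (fun k => Nat.le_mul_of_pos_right k hl0) tendsto_id
      have h0 := (hsum η).tendsto_atTop_zero.comp hcomp
      have heq : (fun k : ℕ => ‖(T ^ k) η‖ ^ 2) =
          (fun m : ℕ => ‖B m η‖ ^ 2 * Real.exp (2 * χ * m)) ∘ (fun k : ℕ => k * l) := by
        funext k
        have h1 : (T ^ k) η = Real.exp (χ * l) ^ k • (((B l) ^ k) η) := by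
          rw [hTpow k]; rfl
        have h2 : ‖(T ^ k) η‖ = Real.exp (χ * l) ^ k * ‖B (k * l) η‖ := by
          rw [h1, norm_smul, hrep0 k]
          congr 1
          rw [Real.norm_eq_abs, abs_of_pos (by positivity)]
        simp only [Function.comp_apply]
        rw [h2, mul_pow, ← Real.exp_nat_mul, ← Real.exp_nat_mul,
          show ((2:ℕ):ℝ) * ((k:ℝ) * (χ * (l:ℝ))) = 2 * χ * ((k * l : ℕ):ℝ) from by
            push_cast; ring]
        ring
      rw [heq]
      exact h0
    have h2 := (Real.continuous_sqrt.tendsto 0).comp hsq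
    rw [Real.sqrt_zero] at h2
    exact h2.congr fun k => by
      simp [Function.comp, Real.sqrt_sq (norm_nonneg _)]
  have hTnorm : Tendsto (fun k => ‖T ^ k‖) atTop (nhds 0) :=
    opnorm_tendsto_zero_of_pointwise (fun k => T ^ k) hTpt
  -- pick k₀ with ‖T^k₀‖ < 1
  have hev : ∀ᶠ k in atTop, ‖T ^ k‖ < 1 := by
    have : Set.Iio (1:ℝ) ∈ nhds (0:ℝ) := Iio_mem_nhds one_pos
    exact (hTnorm.eventually_mem this).mono fun k hk => hk
  obtain ⟨k₀, hk₀c, hk₀1⟩ := (hev.and (eventually_ge_atTop 1)).exists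
  set c : ℝ := ‖T ^ k₀‖ with hc
  have hc1 : c < 1 := hk₀c
  -- c > 0
  obtain ⟨x₀, hx₀⟩ := exists_ne (0 : E)
  have hc0 : 0 < c := by
    rcases lt_or_eq_of_le (norm_nonneg (T ^ k₀)) with h | h
    · exact h
    · exfalso
      have hT0 : T ^ k₀ = 0 := norm_eq_zero.mp h.symm
      have heq : (T ^ k₀) x₀ = Real.exp (χ * l) ^ k₀ • (B (k₀ * l) x₀) := by
        rw [hTpow k₀, hrep0 k₀]; rfl
      rw [hT0] at heq
      simp only [ContinuousLinearMap.zero_apply] at heq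
      have h2 : B (k₀ * l) x₀ = 0 := by
        rcases smul_eq_zero.mp heq.symm with h | h
        · exact absurd h (by positivity)
        · exact h
      have h3 := hBpos (k₀ * l) x₀ hx₀
      rw [h2] at h3
      simp at h3
  -- ρ := ‖(B l)^k₀‖, and c = exp(χ l k₀) * ρ
  set ρ : ℝ := ‖(B l) ^ k₀‖ with hρ
  have hcρ : c = Real.exp (χ * l) ^ k₀ * ρ := by
    have h1 : ‖T ^ k₀‖ = ‖Real.exp (χ * l) ^ k₀ • (B l) ^ k₀‖ := by rw [hTpow k₀]
    rw [norm_smul (Real.exp (χ * l) ^ k₀) ((B l) ^ k₀), Real.norm_eq_abs,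
      abs_of_pos (pow_pos (Real.exp_pos _) k₀)] at h1
    exact h1
  have hρ0 : 0 < ρ := by
    by_contra h
    push_neg at h
    have : ρ = 0 := le_antisymm h (norm_nonneg _)
    rw [this, mul_zero] at hcρ
    exact absurd hcρ (ne_of_gt hc0)
  set L : ℝ := Real.log ρ with hLdef
  have hL : L < -(χ * (k₀ * l)) := by
    have h1 : Real.log c = k₀ * (χ * l) + L := by
      rw [hcρ, ← Real.exp_nat_mul, Real.log_mul (Real.exp_ne_zero _) (ne_of_gt hρ0),
        Real.log_exp]
    have h2 : Real.log c < 0 := Real.log_neg hc0 hc1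
    have h3 : (k₀ : ℝ) * (χ * l) = χ * (k₀ * l) := by ring
    linarith [h1, h2, h3]
  set P : ℕ := k₀ * l with hPdef
  have hP1 : 1 ≤ P := Nat.one_le_iff_ne_zero.mpr (by positivity)
  have hPpos : (0:ℝ) < P := by exact_mod_cast hP1
  have hLP : L / P < -χ := by
    rw [div_lt_iff₀ hPpos]
    calc L < -(χ * (k₀ * l)) := hL
      _ = -χ * P := by rw [hPdef]; push_cast; ring
  -- now fix ξ
  intro ξ hξ
  have hξ0 : 0 < ‖ξ‖ := norm_pos_iff.mpr hξ
  set M : ℝ := 1 + ∑ s ∈ Finset.range P, ‖B s‖ with hM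
  have hM1 : (1:ℝ) ≤ M := by
    have : (0:ℝ) ≤ ∑ s ∈ Finset.range P, ‖B s‖ := by positivity
    linarith
  have hMB : ∀ s : ℕ, s < P → ‖B s‖ ≤ M := by
    intro s hs
    have hle : ‖B s‖ ≤ ∑ i ∈ Finset.range P, ‖B i‖ :=
      Finset.single_le_sum (fun i _ => norm_nonneg _) (Finset.mem_range.mpr hs)
    linarith
  -- key upper bound
  have hkey : ∀ m : ℕ, ‖B m ξ‖ ≤ M * ‖ξ‖ * ρ ^ (m / P) := by
    intro m
    set q := m / P with hq
    set s := m % P with hs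
    have hm : m = s + (k₀ * q) * l := by
      rw [hs, hq, show k₀ * (m / P) * l = m / P * P from by rw [hPdef]; ring]
      exact (Nat.mod_add_div' m P).symm
    have hBm : B m = (B s).comp (((B l) ^ k₀) ^ q) := by
      rw [hm, hrep (k₀ * q) s, pow_mul]
    have h1 : ‖B m ξ‖ ≤ ‖B s‖ * ‖(((B l) ^ k₀) ^ q) ξ‖ := by
      rw [hBm]; exact (B s).le_opNorm _
    have h2 : ‖(((B l) ^ k₀) ^ q) ξ‖ ≤ ρ ^ q * ‖ξ‖ := by
      calc ‖(((B l) ^ k₀) ^ q) ξ‖ ≤ ‖((B l) ^ k₀) ^ q‖ * ‖ξ‖ :=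
            ContinuousLinearMap.le_opNorm _ _
        _ ≤ ρ ^ q * ‖ξ‖ := by
            exact mul_le_mul_of_nonneg_right (norm_pow_le _ _) (norm_nonneg _)
    have hsP : s < P := Nat.mod_lt m hP1
    calc ‖B m ξ‖ ≤ ‖B s‖ * (ρ ^ q * ‖ξ‖) :=
          le_trans h1 (mul_le_mul_of_nonneg_left h2 (norm_nonneg _))
      _ ≤ M * (ρ ^ q * ‖ξ‖) := by
          exact mul_le_mul_of_nonneg_right (hMB s hsP)
            (le_of_lt (mul_pos (pow_pos hρ0 q) hξ0))
      _ = M * ‖ξ‖ * ρ ^ q := by ring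
  -- the comparison function g
  set C₀ : ℝ := Real.log (M * ‖ξ‖) with hC₀
  set g : ℕ → ℝ := fun m => (C₀ - L) * (1 / m) + L / P with hg
  set f : ℕ → ℝ := fun m : ℕ => (1 / (m : ℝ)) * Real.log ‖B m ξ‖ with hf
  have hk₀pos : (0:ℝ) < k₀ := by exact_mod_cast Nat.lt_of_lt_of_le Nat.zero_lt_one hk₀1
  have hlpos : (0:ℝ) < l := by exact_mod_cast hl0
  have hLneg : L < 0 := by nlinarith [hL, mul_pos hχ (mul_pos hk₀pos hlpos)]
  have hfg : ∀ᶠ m in atTop, f m ≤ g m := by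
    filter_upwards [eventually_ge_atTop 1] with m hm1
    have hmR : (1:ℝ) ≤ m := by exact_mod_cast hm1
    have hmpos : (0:ℝ) < m := lt_of_lt_of_le one_pos hmR
    set q := m / P with hq
    have hlog : Real.log ‖B m ξ‖ ≤ C₀ + q * L := by
      have h1 : Real.log ‖B m ξ‖ ≤ Real.log (M * ‖ξ‖ * ρ ^ q) :=
        Real.log_le_log (hBpos m ξ hξ) (hkey m)
      have hMξ : (0:ℝ) < M * ‖ξ‖ := mul_pos (lt_of_lt_of_le one_pos hM1) hξ0
      rw [Real.log_mul (ne_of_gt hMξ) (pow_ne_zero _ (ne_of_gt hρ0)), Real.log_pow] at h1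
      exact h1
    have hqge : (m:ℝ) / P - 1 < q := by
      have h1 : m < (q + 1) * P := by
        calc m = m % P + q * P := by rw [hq]; exact (Nat.mod_add_div' m P).symm
          _ < P + q * P := Nat.add_lt_add_right (Nat.mod_lt m hP1) _
          _ = (q + 1) * P := by ring
      have h1R : (m:ℝ) < ((q:ℝ) + 1) * P := by exact_mod_cast h1
      rw [div_sub_one (ne_of_gt hPpos), div_lt_iff₀ hPpos]
      nlinarith
    have hqL : (q:ℝ) * L ≤ ((m:ℝ) / P - 1) * L :=
      mul_le_mul_of_nonpos_right (le_of_lt hqge) (le_of_lt hLneg)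
    have hlog2 : Real.log ‖B m ξ‖ ≤ C₀ + ((m:ℝ)/P - 1) * L := le_trans hlog (by linarith)
    have hfle : f m ≤ (1 / m) * (C₀ + ((m:ℝ)/P - 1) * L) :=
      mul_le_mul_of_nonneg_left hlog2 (by positivity)
    calc f m ≤ (1 / m) * (C₀ + ((m:ℝ)/P - 1) * L) := hfle
      _ = (C₀ - L) * (1 / m) + L / P := by
          have hm0 : (m:ℝ) ≠ 0 := ne_of_gt hmpos
          have hP0 : (P:ℝ) ≠ 0 := ne_of_gt hPpos
          field_simp
          ring
      _ = g m := rfl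
  have hgL : Tendsto g atTop (nhds (L / P)) := by
    have h1 : Tendsto (fun m : ℕ => (C₀ - L) * (1 / m)) atTop (nhds ((C₀ - L) * 0)) :=
      tendsto_one_div_atTop_nhds_zero_nat.const_mul _
    have h2 := h1.add_const (L / P)
    rw [mul_zero, zero_add] at h2
    exact h2
  -- lower bound for coboundedness
  have hflow : ∀ᶠ m in atTop, -|Real.log ‖ξ‖| - Real.log N ≤ f m := by
    filter_upwards [eventually_ge_atTop 1] with m hm1
    have hmR : (1:ℝ) ≤ m := by exact_mod_cast hm1
    have hmpos : (0:ℝ) < m := lt_of_lt_of_le one_pos hmR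
    have h1 : Real.log ‖ξ‖ ≤ m * Real.log N + Real.log ‖B m ξ‖ := by
      have h2 : Real.log ‖ξ‖ ≤ Real.log (N ^ m * ‖B m ξ‖) :=
        Real.log_le_log hξ0 (hlow m ξ)
      rw [Real.log_mul (ne_of_gt (pow_pos hN0 m)) (ne_of_gt (hBpos m ξ hξ)),
        Real.log_pow] at h2
      exact h2
    have h3 : (1/m) * (Real.log ‖ξ‖ - m * Real.log N) ≤ f m := by
      refine mul_le_mul_of_nonneg_left (by linarith) (by positivity)
    have h4 : (1/m) * (Real.log ‖ξ‖ - m * Real.log N)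
        = Real.log ‖ξ‖ / m - Real.log N := by
      have hm0 : (m:ℝ) ≠ 0 := ne_of_gt hmpos
      field_simp
    have h5 : -|Real.log ‖ξ‖| ≤ Real.log ‖ξ‖ / m := by
      rcases le_or_gt 0 (Real.log ‖ξ‖) with h | h
      · have : (0:ℝ) ≤ Real.log ‖ξ‖ / m := div_nonneg h (le_of_lt hmpos)
        have : -|Real.log ‖ξ‖| ≤ 0 := neg_nonpos.mpr (abs_nonneg _)
        linarith
      · have habs : -|Real.log ‖ξ‖| = Real.log ‖ξ‖ := by
          rw [abs_of_neg h]; ring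
        rw [habs, le_div_iff₀ hmpos]
        nlinarith [mul_nonpos_of_nonpos_of_nonneg (le_of_lt h)
          (by linarith : (0:ℝ) ≤ (m:ℝ) - 1)]
    rw [h4] at h3
    linarith
  have hb1 : IsBoundedUnder (· ≥ ·) atTop f := ⟨_, hflow⟩
  calc limsup f atTop ≤ limsup g atTop :=
        limsup_le_limsup hfg hb1.isCoboundedUnder_le hgL.isBoundedUnder_le
    _ = L / P := hgL.limsup_eq
    _ < -χ := hLP
end

section
/- Let E be a finite-dimensional real inner product space, let F be a real inner product space, let χ > 0, and let (A_m)_{m≥0} be a sequence of continuous linear maps from E to F. If for every nonzero ξ ∈ E one has limsup_{m→∞} (1/m)·log‖A_m ξ‖ < −χ (with the convention that the limsup is −∞ if ‖A_m ξ‖ vanishes eventually), then sup_{ξ ∈ E, ‖ξ‖=1} ∑_{m=0}^∞ ‖A_m ξ‖² e^{2χm} < ∞. -/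
open Filter Real RealInnerProductSpace

lemma summable_pointwise_aux {E F : Type*} [NormedAddCommGroup E] [InnerProductSpace ℝ E]
    [NormedAddCommGroup F] [InnerProductSpace ℝ F]
    (χ : ℝ) (A : ℕ → (E →L[ℝ] F)) (ξ : E)
    (hls : Filter.limsup
        (fun m : ℕ =>
          if ‖A m ξ‖ = 0 then (⊥ : EReal)
          else (((1 / (m : ℝ)) * Real.log ‖A m ξ‖ : ℝ) : EReal))
        Filter.atTop < ((-χ : ℝ) : EReal)) :
    Summable (fun m : ℕ => ‖A m ξ‖ ^ 2 * Real.exp (2 * χ * m)) := by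
  obtain ⟨c, hc1, hc2⟩ := EReal.exists_between_coe_real hls
  have hcχ : c + χ < 0 := by
    have : c < -χ := by exact_mod_cast hc2
    linarith
  have hev := eventually_lt_of_limsup_lt hc1
  rw [eventually_atTop] at hev
  obtain ⟨N, hN⟩ := hev
  have hbound : ∀ m : ℕ, N + 1 ≤ m →
      ‖A m ξ‖ ^ 2 * Real.exp (2 * χ * m) ≤ (Real.exp (2 * (c + χ))) ^ m := by
    intro m hm
    have hmpos : (0 : ℝ) < m := by
      have : 1 ≤ m := le_trans (Nat.le_add_left 1 N) hm
      exact_mod_cast Nat.lt_of_lt_of_le Nat.zero_lt_one this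
    by_cases hz : ‖A m ξ‖ = 0
    · rw [hz]
      have : (0:ℝ) ≤ (Real.exp (2 * (c + χ))) ^ m := by positivity
      simpa using this
    · have hlt := hN m (le_trans (Nat.le_succ N) hm)
      rw [if_neg hz] at hlt
      have hlt' : (1 / (m : ℝ)) * Real.log ‖A m ξ‖ < c := by exact_mod_cast hlt
      have hlog : Real.log ‖A m ξ‖ < c * m := by
        rw [one_div, inv_mul_eq_div] at hlt'
        exact (div_lt_iff₀ hmpos).mp hlt'
      have hpos : 0 < ‖A m ξ‖ := lt_of_le_of_ne (norm_nonneg _) (Ne.symm hz)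
      have hnorm : ‖A m ξ‖ < Real.exp (c * m) := by
        calc ‖A m ξ‖ = Real.exp (Real.log ‖A m ξ‖) := (Real.exp_log hpos).symm
          _ < Real.exp (c * m) := Real.exp_lt_exp.mpr hlog
      calc ‖A m ξ‖ ^ 2 * Real.exp (2 * χ * m)
          ≤ (Real.exp (c * m)) ^ 2 * Real.exp (2 * χ * m) := by
            gcongr
        _ = (Real.exp (2 * (c + χ))) ^ m := by
            rw [← Real.exp_nat_mul, ← Real.exp_add, ← Real.exp_nat_mul]
            congr 1
            push_cast
            ring
  have hgeo : Summable (fun m : ℕ => (Real.exp (2 * (c + χ))) ^ m) :=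
    summable_geometric_of_lt_one (Real.exp_pos _).le
      (Real.exp_lt_one_iff.mpr (by linarith))
  rw [← summable_nat_add_iff (N + 1)]
  refine Summable.of_nonneg_of_le (fun n => by positivity)
    (fun n => hbound (n + (N + 1)) (by omega)) ?_
  exact (summable_nat_add_iff (N + 1)).mpr hgeo

/-- χ-hyp ⊆ χ-summ, linear form: if every nonzero `ξ` satisfies
`limsup (1/m) log ‖A_m ξ‖ < -χ` (with the limsup `-∞` when norms vanish eventually,
encoded via `EReal`), then the weighted square sums are uniformly bounded over the
unit sphere. -/
theorem summable_of_exponential_contraction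
    {E F : Type*} [NormedAddCommGroup E] [InnerProductSpace ℝ E] [FiniteDimensional ℝ E]
    [NormedAddCommGroup F] [InnerProductSpace ℝ F]
    (χ : ℝ) (hχ : 0 < χ) (A : ℕ → (E →L[ℝ] F))
    (h : ∀ ξ : E, ξ ≠ 0 →
      Filter.limsup
        (fun m : ℕ =>
          if ‖A m ξ‖ = 0 then (⊥ : EReal)
          else (((1 / (m : ℝ)) * Real.log ‖A m ξ‖ : ℝ) : EReal))
        Filter.atTop < ((-χ : ℝ) : EReal)) :
    ∃ M : ℝ, ∀ ξ : E, ‖ξ‖ = 1 →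
      Summable (fun m : ℕ => ‖A m ξ‖ ^ 2 * Real.exp (2 * χ * m)) ∧
      ∑' m : ℕ, ‖A m ξ‖ ^ 2 * Real.exp (2 * χ * m) ≤ M := by
  classical
  set d := Module.finrank ℝ E with hd
  let b : OrthonormalBasis (Fin d) ℝ E := stdOrthonormalBasis ℝ E
  have hbne : ∀ i, b i ≠ 0 := fun i =>
    fun h0 => by simpa [h0] using b.orthonormal.1 i
  let S : Fin d → ℕ → ℝ := fun i m => ‖A m (b i)‖ ^ 2 * Real.exp (2 * χ * m)
  have hSi : ∀ i, Summable (S i) := fun i =>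
    summable_pointwise_aux χ A (b i) (h (b i) (hbne i))
  refine ⟨∑ i, ∑' m, S i m, fun ξ hξ => ?_⟩
  have hdom : ∀ m : ℕ, ‖A m ξ‖ ^ 2 * Real.exp (2 * χ * m) ≤ ∑ i, S i m := by
    intro m
    have h1 : ‖A m ξ‖ ^ 2 ≤ ∑ i, ‖A m (b i)‖ ^ 2 := by
      have hrepr : A m ξ = ∑ i, (inner ℝ (b i) ξ : ℝ) • A m (b i) := by
        conv_lhs => rw [← b.sum_repr' ξ]
        rw [map_sum]
        simp [map_smul]
      have hPar : ∑ i, (inner ℝ (b i) ξ : ℝ) ^ 2 = 1 := by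
        have := b.repr.norm_map ξ
        rw [hξ] at this
        have h2 : ‖b.repr ξ‖ ^ 2 = 1 := by rw [this]; norm_num
        rw [EuclideanSpace.norm_eq] at h2
        rw [Real.sq_sqrt (by positivity)] at h2
        calc ∑ i, (inner ℝ (b i) ξ : ℝ) ^ 2 = ∑ i, ‖b.repr ξ i‖ ^ 2 := by
              refine Finset.sum_congr rfl fun i _ => ?_
              rw [b.repr_apply_apply, Real.norm_eq_abs, sq_abs]
          _ = 1 := h2
      calc ‖A m ξ‖ ^ 2 ≤ (∑ i, |(inner ℝ (b i) ξ : ℝ)| * ‖A m (b i)‖) ^ 2 := by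
            have hle : ‖A m ξ‖ ≤ ∑ i, |(inner ℝ (b i) ξ : ℝ)| * ‖A m (b i)‖ := by
              rw [hrepr]
              refine le_trans (norm_sum_le _ _) ?_
              refine Finset.sum_le_sum fun i _ => ?_
              rw [norm_smul, Real.norm_eq_abs]
            exact pow_le_pow_left₀ (norm_nonneg _) hle 2
        _ ≤ (∑ i, (inner ℝ (b i) ξ : ℝ) ^ 2) * ∑ i, ‖A m (b i)‖ ^ 2 := by
            have := Finset.sum_mul_sq_le_sq_mul_sq Finset.univ
              (fun i => |(inner ℝ (b i) ξ : ℝ)|) (fun i => ‖A m (b i)‖)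
            simpa [sq_abs] using this
        _ = ∑ i, ‖A m (b i)‖ ^ 2 := by rw [hPar, one_mul]
    calc ‖A m ξ‖ ^ 2 * Real.exp (2 * χ * m)
        ≤ (∑ i, ‖A m (b i)‖ ^ 2) * Real.exp (2 * χ * m) := by
          gcongr
      _ = ∑ i, S i m := by simp only [S]; rw [Finset.sum_mul]
  have hsumS : Summable (fun m => ∑ i, S i m) := summable_sum fun i _ => hSi i
  have hsum : Summable (fun m : ℕ => ‖A m ξ‖ ^ 2 * Real.exp (2 * χ * m)) :=
    Summable.of_nonneg_of_le (fun m => by positivity) hdom hsumS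
  refine ⟨hsum, ?_⟩
  calc ∑' m, ‖A m ξ‖ ^ 2 * Real.exp (2 * χ * m)
      ≤ ∑' m, ∑ i, S i m := Summable.tsum_le_tsum hdom hsum hsumS
    _ = ∑ i, ∑' m, S i m := Summable.tsum_finsetSum fun i _ => hSi i
end

section
/- Let ε > 0 and ε' ≥ (3/2)ε. Let q, Q, Q' : ℤ → (0,∞) and b ∈ (0,1] satisfy: (i) for every n, q(n) ∈ {e^{−ℓε/3} : ℓ ∈ ℕ} and q(n) < ε; (ii) e^{−ε} ≤ q(n+1)/q(n) ≤ e^{ε} for every n; (iii) limsup_{n→+∞} q(n) > 0 and limsup_{n→−∞} q(n) > 0; (iv) q(n) ≤ Q(n) for every n; (v) b·Q(n) ≤ Q'(n) for every n. Then there exists q' : ℤ → (0,∞) such that: for every n, q'(n) ∈ {e^{−ℓε'/3} : ℓ ∈ ℕ} and q'(n) < ε'; e^{−ε'} ≤ q'(n+1)/q'(n) ≤ e^{ε'} for every n; limsup_{n→+∞} q'(n) > 0 and limsup_{n→−∞} q'(n) > 0; and q'(n) ≤ Q'(n) for every n. -/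
open Filter Real

private lemma limsup_pos_aux {l : Filter ℤ} [l.NeBot] {f g : ℤ → ℝ} {c : ℝ}
    (hc : 0 < c) (hfpos : ∀ n, 0 < f n) (hgb : ∀ n, g n ≤ 1)
    (hcf : ∀ n, c * f n ≤ g n) (hf : 0 < Filter.limsup f l) :
    0 < Filter.limsup g l := by
  have hcob : Filter.IsCoboundedUnder (· ≤ ·) l f :=
    Filter.IsCoboundedUnder.of_frequently_ge (a := 0)
      (Filter.Eventually.frequently (Filter.Eventually.of_forall fun n => (hfpos n).le))
  have hfreq : ∃ᶠ n in l, Filter.limsup f l / 2 ≤ f n := by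
    by_contra h
    have hev : ∀ᶠ n in l, f n ≤ Filter.limsup f l / 2 := by
      filter_upwards [Filter.not_frequently.mp h] with n hn
      exact le_of_not_ge hn
    have := Filter.limsup_le_of_le hcob hev
    linarith
  have hfreq' : ∃ᶠ n in l, c * (Filter.limsup f l / 2) ≤ g n := by
    refine hfreq.mono fun n hn => ?_
    exact le_trans (by nlinarith [hfpos n]) (hcf n)
  have hb : Filter.IsBoundedUnder (· ≤ ·) l g :=
    Filter.isBoundedUnder_of ⟨1, fun n => hgb n⟩
  have := Filter.le_limsup_of_frequently_le hfreq' hb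
  nlinarith

/-- HWT_χ^ε ⊆ HWT_χ^{ε'} for ε' ≥ (3/2)ε, stated along a single
orbit: an ε-weak temperability function can be converted into an ε'-weak
temperability function. -/
theorem weak_temperability_monotone
    (ε ε' : ℝ) (hε : 0 < ε) (hε' : (3 / 2) * ε ≤ ε')
    (q Q Q' : ℤ → ℝ) (b : ℝ) (hb0 : 0 < b) (hb1 : b ≤ 1)
    (hqpos : ∀ n : ℤ, 0 < q n)
    (hQpos : ∀ n : ℤ, 0 < Q n) (hQ'pos : ∀ n : ℤ, 0 < Q' n)
    (hgrid : ∀ n : ℤ, ∃ ℓ : ℕ, q n = Real.exp (-((ℓ : ℝ) * ε) / 3))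
    (hless : ∀ n : ℤ, q n < ε)
    (hratio : ∀ n : ℤ, Real.exp (-ε) ≤ q (n + 1) / q n ∧ q (n + 1) / q n ≤ Real.exp ε)
    (hlimsup_top : 0 < Filter.limsup q Filter.atTop)
    (hlimsup_bot : 0 < Filter.limsup q Filter.atBot)
    (hqQ : ∀ n : ℤ, q n ≤ Q n)
    (hQQ' : ∀ n : ℤ, b * Q n ≤ Q' n) :
    ∃ q' : ℤ → ℝ,
      (∀ n : ℤ, 0 < q' n) ∧
      (∀ n : ℤ, ∃ ℓ : ℕ, q' n = Real.exp (-((ℓ : ℝ) * ε') / 3)) ∧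
      (∀ n : ℤ, q' n < ε') ∧
      (∀ n : ℤ, Real.exp (-ε') ≤ q' (n + 1) / q' n ∧ q' (n + 1) / q' n ≤ Real.exp ε') ∧
      0 < Filter.limsup q' Filter.atTop ∧
      0 < Filter.limsup q' Filter.atBot ∧
      (∀ n : ℤ, q' n ≤ Q' n) := by
  have hε'pos : 0 < ε' := lt_of_lt_of_le (by linarith) hε'
  have hq1 : ∀ n, q n ≤ 1 := by
    intro n
    obtain ⟨ℓ, hℓ⟩ := hgrid n
    rw [hℓ]
    refine Real.exp_le_one_iff.mpr ?_
    have : (0:ℝ) ≤ (ℓ : ℝ) * ε := by positivity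
    linarith
  set x : ℤ → ℝ := fun n => -Real.log (b * q n) with hx
  have hbq : ∀ n, 0 < b * q n := fun n => mul_pos hb0 (hqpos n)
  have hxnn : ∀ n, 0 ≤ x n := by
    intro n
    have h1 : b * q n ≤ 1 := by nlinarith [hq1 n, (hqpos n).le]
    simpa [hx] using Real.log_nonpos (hbq n).le h1
  set L : ℤ → ℕ := fun n => ⌈3 * x n / ε'⌉₊ with hL
  set q' : ℤ → ℝ := fun n => Real.exp (-((L n : ℝ) * ε') / 3) with hq'
  have hLval : ∀ m : ℤ, L m = ⌈3 * x m / ε'⌉₊ := fun m => by rw [hL]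
  clear_value x L
  have hLge : ∀ n, x n ≤ (L n : ℝ) * ε' / 3 := by
    intro n
    have h1 : 3 * x n / ε' ≤ (L n : ℝ) := by
      rw [hLval]; exact Nat.le_ceil _
    rw [div_le_iff₀ hε'pos] at h1
    linarith
  have hkey : ∀ n, q' n ≤ b * q n := by
    intro n
    have : q' n ≤ Real.exp (-(x n)) := Real.exp_le_exp.mpr (by
      have := hLge n; simp only [neg_div]; linarith)
    rwa [hx, neg_neg, Real.exp_log (hbq n)] at this
  have hq'pos : ∀ n, 0 < q' n := fun n => Real.exp_pos _
  have hq'1 : ∀ n, q' n ≤ 1 := by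
    intro n
    refine Real.exp_le_one_iff.mpr ?_
    have : (0:ℝ) ≤ (L n : ℝ) * ε' := mul_nonneg (Nat.cast_nonneg _) hε'pos.le
    simp only [neg_div]
    linarith
  -- lower bound q' n ≥ exp(-ε'/3) * (b * q n)
  have hlow : ∀ n, Real.exp (-ε'/3) * (b * q n) ≤ q' n := by
    intro n
    have h1 : (L n : ℝ) < 3 * x n / ε' + 1 := by
      rw [hLval]
      exact Nat.ceil_lt_add_one (div_nonneg (by linarith [hxnn n]) hε'pos.le)
    have h2 : (L n : ℝ) * ε' / 3 < x n + ε' / 3 := by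
      have h1' : (L n : ℝ) - 1 < 3 * x n / ε' := by linarith
      rw [lt_div_iff₀ hε'pos] at h1'
      nlinarith
    have : Real.exp (-(x n + ε'/3)) ≤ q' n := by
      refine Real.exp_le_exp.mpr ?_
      simp only [neg_div]
      linarith
    calc Real.exp (-ε'/3) * (b * q n) = Real.exp (-(x n + ε'/3)) := by
          rw [show -(x n + ε'/3) = -ε'/3 + -(x n) by ring, Real.exp_add,
            hx, neg_neg, Real.exp_log (hbq n)]
      _ ≤ q' n := this
  -- ratio of x's
  have hxdiff : ∀ n, |x (n+1) - x n| ≤ ε := by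
    intro n
    obtain ⟨h1, h2⟩ := hratio n
    have hlog1 : Real.log (q (n+1) / q n) ≤ ε := by
      calc Real.log (q (n+1) / q n) ≤ Real.log (Real.exp ε) :=
            Real.log_le_log (div_pos (hqpos _) (hqpos _)) h2
        _ = ε := Real.log_exp ε
    have hlog2 : -ε ≤ Real.log (q (n+1) / q n) := by
      calc -ε = Real.log (Real.exp (-ε)) := (Real.log_exp _).symm
        _ ≤ Real.log (q (n+1) / q n) :=
            Real.log_le_log (Real.exp_pos _) h1
    have heq : x (n+1) - x n = -(Real.log (q (n+1) / q n)) := by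
      rw [hx]
      simp only
      rw [Real.log_mul hb0.ne' (hqpos _).ne', Real.log_mul hb0.ne' (hqpos _).ne',
        Real.log_div (hqpos _).ne' (hqpos _).ne']
      ring
    rw [heq, abs_neg, abs_le]
    exact ⟨hlog2, hlog1⟩
  have hLdiff : ∀ n, |(L (n+1) : ℝ) - (L n : ℝ)| ≤ 2 := by
    intro n
    have hd := hxdiff n
    rw [abs_le] at hd ⊢
    have key : ∀ m k : ℤ, x m - x k ≤ ε → (L m : ℝ) ≤ (L k : ℝ) + 2 := by
      intro m k h
      have h3 : 3 * x m / ε' ≤ 3 * x k / ε' + 2 := by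
        rw [div_add' _ _ _ hε'pos.ne', div_le_div_iff₀ hε'pos hε'pos]
        nlinarith
      have hnat : (⌈3 * x m / ε'⌉₊ : ℕ) ≤ ⌈3 * x k / ε'⌉₊ + 2 := by
        rw [Nat.ceil_le]
        push_cast
        calc 3 * x m / ε' ≤ 3 * x k / ε' + 2 := h3
          _ ≤ (⌈3 * x k / ε'⌉₊ : ℝ) + 2 := by linarith [Nat.le_ceil (3 * x k / ε')]
      have hnat' : L m ≤ L k + 2 := by rw [hLval, hLval]; exact hnat
      exact_mod_cast hnat'
    constructor
    · have := key n (n+1) (by linarith [hd.1]); linarith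
    · have := key (n+1) n (by linarith [hd.2]); linarith
  refine ⟨q', hq'pos, fun n => ⟨L n, rfl⟩, ?_, ?_, ?_, ?_, ?_⟩
  · -- q' n < ε'
    intro n
    have : q' n ≤ b * q n := hkey n
    have h2 : b * q n ≤ q n := by nlinarith [(hqpos n).le]
    have h3 : q n < ε := hless n
    have : ε < ε' := by linarith
    linarith
  · -- ratio
    intro n
    have hdiff := hLdiff n
    rw [abs_le] at hdiff
    have heq : q' (n+1) / q' n = Real.exp (((L n : ℝ) - (L (n+1) : ℝ)) * ε' / 3) := by
      rw [hq']
      simp only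
      rw [← Real.exp_sub]
      congr 1
      ring
    rw [heq]
    constructor
    · refine Real.exp_le_exp.mpr ?_
      rw [le_div_iff₀ (by norm_num : (0:ℝ) < 3)]
      nlinarith
    · refine Real.exp_le_exp.mpr ?_
      rw [div_le_iff₀ (by norm_num : (0:ℝ) < 3)]
      nlinarith
  · exact limsup_pos_aux (mul_pos (Real.exp_pos (-ε'/3)) hb0) hqpos hq'1
      (fun n => by have := hlow n; nlinarith) hlimsup_top
  · exact limsup_pos_aux (mul_pos (Real.exp_pos (-ε'/3)) hb0) hqpos hq'1
      (fun n => by have := hlow n; nlinarith) hlimsup_bot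
  · intro n
    calc q' n ≤ b * q n := hkey n
      _ ≤ b * Q n := by nlinarith [hqQ n]
      _ ≤ Q' n := hQQ' n
end

section
/- Let E and F be real inner product spaces, let A : E → F be an invertible continuous linear map with ‖A⁻¹‖ ≤ κ₀ for some κ₀ > 0, and let χ > 0. Let S : E → [0,∞) and S' : F → [0,∞) be functions satisfying: S(ξ)² = 2‖ξ‖² + e^{2χ}·S'(Aξ)² for all ξ ∈ E, and S'(η)² ≥ 2‖η‖² for all η ∈ F. Then for every ξ ∈ E: (i) S'(Aξ) ≤ e^{−χ}·S(ξ), and (ii) S'(Aξ) ≥ (1/√2)·min(e^{−χ}, 1/κ₀)·S(ξ). -/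
open Real

lemma sq_le_sq_mono {a b : ℝ} (_ : 0 ≤ a) (hb : 0 ≤ b) (h : a ^ 2 ≤ b ^ 2) : a ≤ b := by
  nlinarith

/-- bounds on the stable block of the Pesin–Oseledec reduction:
`S'(Aξ) ≤ e^{-χ} S(ξ)` and `S'(Aξ) ≥ (1/√2) min(e^{-χ}, 1/κ₀) S(ξ)`. -/
theorem lyapunov_block_bounds
    {E F : Type*} [NormedAddCommGroup E] [InnerProductSpace ℝ E]
    [NormedAddCommGroup F] [InnerProductSpace ℝ F]
    (A : E ≃L[ℝ] F) (κ₀ : ℝ) (hκ₀ : 0 < κ₀)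
    (hA : ‖(A.symm : F →L[ℝ] E)‖ ≤ κ₀)
    (χ : ℝ) (hχ : 0 < χ)
    (S : E → ℝ) (S' : F → ℝ)
    (hS : ∀ ξ : E, 0 ≤ S ξ) (hS' : ∀ η : F, 0 ≤ S' η)
    (hco : ∀ ξ : E, (S ξ) ^ 2 = 2 * ‖ξ‖ ^ 2 + Real.exp (2 * χ) * (S' (A ξ)) ^ 2)
    (hlow : ∀ η : F, 2 * ‖η‖ ^ 2 ≤ (S' η) ^ 2) :
    ∀ ξ : E,
      S' (A ξ) ≤ Real.exp (-χ) * S ξ ∧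
      (1 / Real.sqrt 2) * min (Real.exp (-χ)) (1 / κ₀) * S ξ ≤ S' (A ξ) := by
  intro ξ
  have hnξ : ‖ξ‖ ≤ κ₀ * ‖A ξ‖ := by
    have h1 : ‖(A.symm : F →L[ℝ] E) (A ξ)‖ ≤ ‖(A.symm : F →L[ℝ] E)‖ * ‖A ξ‖ :=
      (A.symm : F →L[ℝ] E).le_opNorm _
    have h2 : (A.symm : F →L[ℝ] E) (A ξ) = ξ := A.symm_apply_apply ξ
    rw [h2] at h1
    exact h1.trans (mul_le_mul_of_nonneg_right hA (norm_nonneg _))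
  have hexp : Real.exp (-χ) ^ 2 * Real.exp (2 * χ) = 1 := by
    rw [sq, ← Real.exp_add, ← Real.exp_add, show -χ + -χ + 2*χ = 0 by ring, Real.exp_zero]
  constructor
  · -- upper bound
    apply sq_le_sq_mono (hS' (A ξ)) (mul_nonneg (Real.exp_pos _).le (hS ξ))
    rw [mul_pow, hco ξ]
    nlinarith [sq_nonneg ‖ξ‖, Real.exp_pos (-χ), sq_nonneg (S' (A ξ)), Real.exp_pos (2*χ),
      mul_le_mul_of_nonneg_left (hco ξ).le (sq_nonneg (Real.exp (-χ)))]
  · -- lower bound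
    set m := min (Real.exp (-χ)) (1 / κ₀) with hm
    have hm0 : 0 < m := lt_min (Real.exp_pos _) (by positivity)
    have hmκ : m ≤ 1 / κ₀ := min_le_right _ _
    have hmχ : m ≤ Real.exp (-χ) := min_le_left _ _
    apply sq_le_sq_mono (mul_nonneg (by positivity) (hS ξ)) (hS' (A ξ))
    have h2 : ((1 : ℝ) / Real.sqrt 2) ^ 2 = 1 / 2 := by
      rw [div_pow, Real.sq_sqrt (by norm_num : (0:ℝ) ≤ 2)]; norm_num
    have hmsq1 : m ^ 2 ≤ Real.exp (-χ) ^ 2 := pow_le_pow_left₀ hm0.le hmχ 2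
    have hmsq2 : m ^ 2 ≤ (1 / κ₀) ^ 2 := pow_le_pow_left₀ hm0.le hmκ 2
    have hξsq : ‖ξ‖ ^ 2 ≤ κ₀ ^ 2 * ‖A ξ‖ ^ 2 := by
      nlinarith [norm_nonneg ξ, norm_nonneg (A ξ)]
    have hAxi : 2 * ‖A ξ‖ ^ 2 ≤ (S' (A ξ)) ^ 2 := hlow (A ξ)
    have hinv : (1 / κ₀) ^ 2 * ‖ξ‖ ^ 2 ≤ ‖A ξ‖ ^ 2 := by
      rw [div_pow, one_pow, div_mul_eq_mul_div, div_le_iff₀ (by positivity)]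
      nlinarith
    rw [mul_pow, mul_pow, h2, hco ξ]
    nlinarith [hS' (A ξ), sq_nonneg ‖ξ‖,
      mul_le_mul_of_nonneg_right hmsq2 (sq_nonneg ‖ξ‖),
      mul_le_mul_of_nonneg_right hmsq1
        (mul_nonneg (Real.exp_pos (2*χ)).le (sq_nonneg (S' (A ξ))))]
end
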